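/- Let π₁ : (X,T) → (Y,T) and π₂ : (Y,T) → (Z,T) be open factor maps between minimal topological dynamical systems, and suppose each of π₁ and π₂ has a relatively invariant measure with a section of full support. Then the composition π₂ ∘ π₁ : (X,T) → (Z,T) has a relatively invariant measure with a section of full support; explicitly, if λ¹ : Y → M(X) and λ² : Z → M(Y) are full-support sections, then η : Z → M(X) defined by η_z(f) = ∫_Y (∫_X f dλ¹_y) dλ²_z(y) for f ∈ C(X) is a full-support section for π₂ ∘ π₁. -/

import Mathlib

open MeasureTheory
open scoped ENNReal NNReal

/-- A system is minimal if every (full) orbit is dense. -/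
def IsMinimal {X : Type*} [TopologicalSpace X] (T : Equiv.Perm X) : Prop :=
  ∀ x : X, Dense (Set.range fun n : ℤ => (T ^ n) x)

/-- `lam` is a full-support section for the factor map `π : (X,T) → (Y,S)`:
it is continuous, satisfies `T_* lam_y = lam_{S y}`, and `supp lam_y = π⁻¹(y)` for all `y`
(encoded by: `lam_y (π⁻¹ {y}) = 1` and every point of the fiber has all of its open
neighborhoods of positive `lam_y`-measure). -/
def IsFullSupportSection {X Y : Type*}
    [TopologicalSpace X] [MeasurableSpace X] [OpensMeasurableSpace X] [TopologicalSpace Y]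
    (T : Equiv.Perm X) (S : Equiv.Perm Y) (π : X → Y)
    (lam : Y → ProbabilityMeasure X) : Prop :=
  Continuous lam ∧
  (∀ y : Y, (lam y : Measure X).map T = (lam (S y) : Measure X)) ∧
  (∀ y : Y, (lam y : Measure X) (π ⁻¹' {y}) = 1) ∧
  (∀ y : Y, ∀ x : X, π x = y → ∀ U : Set X, IsOpen U → x ∈ U →
    0 < (lam y : Measure X) U)

open Filter in
/-- For an open set `G`, the map `y ↦ (lam y) G` is lower semicontinuous whenever
`lam` is a continuous family of probability measures. -/
lemma lsc_aux {Y X : Type*} [TopologicalSpace Y] [MetricSpace X] [MeasurableSpace X]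
    [BorelSpace X] {lam : Y → ProbabilityMeasure X} (hc : Continuous lam)
    {G : Set X} (hG : IsOpen G) :
    LowerSemicontinuous fun y => (lam y : Measure X) G := fun y c hcy =>
  eventually_lt_of_lt_liminf (lt_of_lt_of_le hcy
    (ProbabilityMeasure.le_liminf_measure_open_of_tendsto (hc.tendsto y) hG))

/-- A continuous family of probability measures is measurable as a family of measures. -/
lemma measurable_aux {Y X : Type*} [TopologicalSpace Y] [MeasurableSpace Y]
    [OpensMeasurableSpace Y] [MetricSpace X] [MeasurableSpace X] [BorelSpace X]
    {lam : Y → ProbabilityMeasure X} (hc : Continuous lam) :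
    Measurable fun y => (lam y : Measure X) := by
  apply Measure.measurable_of_measurable_coe
  refine fun s hs => MeasurableSet.induction_on_open
    (C := fun s _ => Measurable fun y => (lam y : Measure X) s) ?_ ?_ ?_ s hs
  · exact fun U hU => (lsc_aux hc hU).measurable
  · intro t ht iht
    simp_rw [measure_compl ht (measure_ne_top _ _), measure_univ]
    exact measurable_const.sub iht
  · intro f hd hm ih
    simp_rw [measure_iUnion hd hm]
    exact Measurable.ennreal_tsum ih

/-- Let `π₁ : (X,T_X) → (Y,T_Y)` and `π₂ : (Y,T_Y) → (Z,T_Z)` be open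
factor maps between minimal t.d.s., each admitting a RIM with a full-support section.
Then so does `π₂ ∘ π₁`; explicitly the section `η_z = ∫_Y λ¹_y dλ²_z(y)`
(i.e. `η z = (λ² z).bind λ¹`) is a full-support section for `π₂ ∘ π₁`. -/
theorem comp_full_support_section {X Y Z : Type*}
    [MetricSpace X] [CompactSpace X] [MeasurableSpace X] [BorelSpace X]
    [MetricSpace Y] [CompactSpace Y] [MeasurableSpace Y] [BorelSpace Y]
    [MetricSpace Z] [CompactSpace Z] [MeasurableSpace Z] [BorelSpace Z]
    (TX : Equiv.Perm X) (hTX : Continuous TX) (hTX' : Continuous TX.symm)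
    (TY : Equiv.Perm Y) (hTY : Continuous TY) (hTY' : Continuous TY.symm)
    (TZ : Equiv.Perm Z) (hTZ : Continuous TZ) (hTZ' : Continuous TZ.symm)
    (hminX : IsMinimal TX) (hminY : IsMinimal TY) (hminZ : IsMinimal TZ)
    (π₁ : X → Y) (hπ₁c : Continuous π₁) (hπ₁s : Function.Surjective π₁)
    (hπ₁o : IsOpenMap π₁) (hfac₁ : ∀ x : X, π₁ (TX x) = TY (π₁ x))
    (π₂ : Y → Z) (hπ₂c : Continuous π₂) (hπ₂s : Function.Surjective π₂)
    (hπ₂o : IsOpenMap π₂) (hfac₂ : ∀ y : Y, π₂ (TY y) = TZ (π₂ y))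
    (lam₁ : Y → ProbabilityMeasure X) (hlam₁ : IsFullSupportSection TX TY π₁ lam₁)
    (lam₂ : Z → ProbabilityMeasure Y) (hlam₂ : IsFullSupportSection TY TZ π₂ lam₂) :
    ∃ η : Z → ProbabilityMeasure X,
      (∀ z : Z, (η z : Measure X) = (lam₂ z : Measure Y).bind fun y => (lam₁ y : Measure X)) ∧
      IsFullSupportSection TX TZ (π₂ ∘ π₁) η := by
  obtain ⟨hc₁, heq₁, hfib₁, hsupp₁⟩ := hlam₁
  obtain ⟨hc₂, heq₂, hfib₂, hsupp₂⟩ := hlam₂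
  have hm₁ : Measurable fun y => (lam₁ y : Measure X) := measurable_aux hc₁
  have hprob : ∀ z : Z,
      IsProbabilityMeasure ((lam₂ z : Measure Y).bind fun y => (lam₁ y : Measure X)) := by
    intro z
    constructor
    rw [Measure.bind_apply MeasurableSet.univ hm₁.aemeasurable]
    simp
  set η : Z → ProbabilityMeasure X :=
    fun z => ⟨(lam₂ z : Measure Y).bind fun y => (lam₁ y : Measure X), hprob z⟩ with hηdef
  have hηcoe : ∀ z, (η z : Measure X)
      = (lam₂ z : Measure Y).bind fun y => (lam₁ y : Measure X) := fun z => rfl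
  refine ⟨η, hηcoe, ?_, ?_, ?_, ?_⟩
  · -- continuity
    rw [continuous_iff_continuousAt]
    intro z
    rw [ContinuousAt, ProbabilityMeasure.tendsto_iff_forall_lintegral_tendsto]
    intro f
    set L : Y → ℝ≥0∞ := fun y => ∫⁻ x, f x ∂(lam₁ y : Measure X) with hLdef
    have hLcont : Continuous L := by
      rw [continuous_iff_continuousAt]
      intro y
      exact ProbabilityMeasure.tendsto_iff_forall_lintegral_tendsto.mp (hc₁.tendsto y) f
    have hLne : ∀ y, L y ≠ ⊤ :=
      fun y => (BoundedContinuousFunction.lintegral_lt_top_of_nnreal _ f).ne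
    have hg0c : Continuous fun y => (L y).toNNReal := by
      rw [continuous_iff_continuousAt]
      intro y
      exact (ENNReal.tendsto_toNNReal (hLne y)).comp (hLcont.tendsto y)
    have hg0le : ∀ y, ((L y).toNNReal : ℝ) ≤ (nndist f 0 : ℝ) := by
      intro y
      have h1 : L y ≤ ((nndist f 0 : ℝ≥0) : ℝ≥0∞) := by
        calc L y ≤ ∫⁻ _, ((nndist f 0 : ℝ≥0) : ℝ≥0∞) ∂(lam₁ y : Measure X) := by
              apply lintegral_mono; intro x
              exact ENNReal.coe_le_coe.mpr (BoundedContinuousFunction.NNReal.upper_bound f x)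
          _ = ((nndist f 0 : ℝ≥0) : ℝ≥0∞) := by simp
      have h2 := ENNReal.toNNReal_mono ENNReal.coe_ne_top h1
      rw [ENNReal.toNNReal_coe] at h2
      exact_mod_cast h2
    set g : BoundedContinuousFunction Y ℝ≥0 :=
      ⟨⟨fun y => (L y).toNNReal, hg0c⟩, ⟨2 * (nndist f 0 : ℝ), fun a b => by
        calc dist ((L a).toNNReal) ((L b).toNNReal)
            ≤ dist ((L a).toNNReal) 0 + dist (0 : ℝ≥0) ((L b).toNNReal) := dist_triangle _ _ _
          _ ≤ (nndist f 0 : ℝ) + (nndist f 0 : ℝ) := by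
              apply add_le_add
              · rw [NNReal.dist_eq]
                simpa [abs_of_nonneg] using hg0le a
              · rw [dist_comm, NNReal.dist_eq]
                simpa [abs_of_nonneg] using hg0le b
          _ = 2 * (nndist f 0 : ℝ) := by ring⟩⟩ with hgdef
    have hrw : ∀ z', ∫⁻ x, f x ∂(η z' : Measure X)
        = ∫⁻ y, (g y : ℝ≥0∞) ∂(lam₂ z' : Measure Y) := by
      intro z'
      rw [hηcoe, Measure.lintegral_bind hm₁.aemeasurable f.measurable_coe_ennreal_comp.aemeasurable]
      refine lintegral_congr fun y => ?_
      show L y = (((L y).toNNReal : ℝ≥0) : ℝ≥0∞)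
      rw [ENNReal.coe_toNNReal (hLne y)]
    simp only [hrw]
    exact ProbabilityMeasure.tendsto_iff_forall_lintegral_tendsto.mp (hc₂.tendsto z) g
  · -- equivariance
    intro z
    rw [hηcoe, hηcoe]
    ext s hs
    rw [Measure.map_apply hTX.measurable hs,
      Measure.bind_apply (hTX.measurable hs) hm₁.aemeasurable, Measure.bind_apply hs hm₁.aemeasurable]
    have h1 : ∀ y, (lam₁ y : Measure X) (TX ⁻¹' s) = (lam₁ (TY y) : Measure X) s := by
      intro y
      rw [← heq₁ y, Measure.map_apply hTX.measurable hs]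
    simp_rw [h1]
    have hfm : Measurable fun y => (lam₁ y : Measure X) s :=
      (Measure.measurable_coe hs).comp hm₁
    rw [← heq₂ z, lintegral_map hfm hTY.measurable]
  · -- fiber measure one
    intro z
    have hSm : MeasurableSet ((π₂ ∘ π₁) ⁻¹' {z}) :=
      (hπ₂c.comp hπ₁c).measurable (measurableSet_singleton z)
    rw [hηcoe, Measure.bind_apply hSm hm₁.aemeasurable]
    have hae : ∀ᵐ y ∂(lam₂ z : Measure Y), π₂ y = z := by
      rw [ae_iff]
      have hset : {y | ¬ π₂ y = z} = (π₂ ⁻¹' {z})ᶜ := by ext y; simp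
      rw [hset, measure_compl (hπ₂c.measurable (measurableSet_singleton z))
        (measure_ne_top _ _), measure_univ, hfib₂ z, tsub_self]
    have hone : ∫⁻ y, (lam₁ y : Measure X) ((π₂ ∘ π₁) ⁻¹' {z}) ∂(lam₂ z : Measure Y)
        = ∫⁻ _, 1 ∂(lam₂ z : Measure Y) := by
      apply lintegral_congr_ae
      filter_upwards [hae] with y hy
      have hsub : π₁ ⁻¹' {y} ⊆ (π₂ ∘ π₁) ⁻¹' {z} := by
        intro x hx
        simp only [Set.mem_preimage, Set.mem_singleton_iff] at hx ⊢
        rw [Function.comp_apply, hx, hy]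
      exact le_antisymm prob_le_one
        (le_trans (le_of_eq (hfib₁ y).symm) (measure_mono hsub))
    rw [hone, lintegral_one, measure_univ]
  · -- full support
    intro z x hx U hU hxU
    set W : Set Y := {y | 0 < (lam₁ y : Measure X) U} with hWdef
    have hWopen : IsOpen W := by
      rw [isOpen_iff_mem_nhds]
      intro y hy
      exact lsc_aux hc₁ hU y 0 hy
    have hyW : π₁ x ∈ W := hsupp₁ (π₁ x) x rfl U hU hxU
    have hWpos : 0 < (lam₂ z : Measure Y) W := hsupp₂ z (π₁ x) hx W hWopen hyW
    rw [hηcoe, Measure.bind_apply hU.measurableSet hm₁.aemeasurable]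
    have hfm : Measurable fun y => (lam₁ y : Measure X) U :=
      (Measure.measurable_coe hU.measurableSet).comp hm₁
    rw [lintegral_pos_iff_support hfm]
    refine lt_of_lt_of_le hWpos (measure_mono fun y hy => ?_)
    exact (show (0:ℝ≥0∞) < _ from hy).ne'
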